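/- Let G be a group and A ⊆ G. Suppose the relation R(b,c) := (b·c ∈ A) is stable on G, i.e., there is no k such that there exist b_1,…,b_k, c_1,…,c_k ∈ G with b_i·c_j ∈ A iff i ≤ j, for all k (no order property of unbounded length). If A has the 1-sided productset property, then A has the productset property: there exist infinite sets B, C ⊆ G with B·C ⊆ A. -/

import Mathlib

open Filter

/-- Build a strictly monotone sequence inside `S` along an ultrafilter. -/
lemma build_seq (U : Ultrafilter ℕ) (hU : ∀ s ∈ U, s.Infinite) (S : Set ℕ) (hS : S ∈ U)
    (Q : ℕ → ℕ → Prop) (hQ : ∀ i ∈ S, {j | Q i j} ∈ U) :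
    ∃ a : ℕ → ℕ, StrictMono a ∧ (∀ n, a n ∈ S) ∧ ∀ i j, i < j → Q (a i) (a j) := by
  classical
  -- the "good" set after a finite stage x
  set W : Finset ℕ → Set ℕ := fun x => S ∩ ⋂ i ∈ (x.filter (· ∈ S)), {j | Q i j} with hW
  have hWU : ∀ x : Finset ℕ, W x ∈ U := by
    intro x
    refine inter_mem hS ?_
    exact (biInter_mem (x.filter (· ∈ S)).finite_toSet).2
      (fun i hi => hQ i (by simpa using (Finset.mem_filter.1 hi).2))
  have hpick : ∀ x : Finset ℕ, ∃ m ∈ W x, x.sup id < m := fun x =>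
    (hU _ (hWU x)).exists_gt (x.sup id)
  let pick : Finset ℕ → ℕ := fun x => (hpick x).choose
  have hpick1 : ∀ x, pick x ∈ W x := fun x => (hpick x).choose_spec.1
  have hpick2 : ∀ x, x.sup id < pick x := fun x => (hpick x).choose_spec.2
  -- the stages
  let s : ℕ → Finset ℕ := fun n => Nat.rec ∅ (fun _ x => insert (pick x) x) n
  have hs : ∀ n, s (n + 1) = insert (pick (s n)) (s n) := fun n => rfl
  let a : ℕ → ℕ := fun n => pick (s n)
  have hmem : ∀ n, a n ∈ s (n + 1) := fun n => by rw [hs]; exact Finset.mem_insert_self _ _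
  have hsmono : ∀ m n, m ≤ n → s m ⊆ s n := by
    intro m n h
    induction n with
    | zero => simp [Nat.le_zero.1 h]
    | succ k ih =>
      rcases Nat.le_succ_iff.1 h with h' | h'
      · exact (ih h').trans (by rw [hs]; exact Finset.subset_insert _ _)
      · simp [h']
  have hgt : ∀ n, ∀ i ∈ s n, i < a n := by
    intro n i hi
    exact lt_of_le_of_lt (Finset.le_sup (f := id) hi) (hpick2 (s n))
  have haS : ∀ n, a n ∈ S := fun n => (hpick1 (s n)).1
  have hamono : StrictMono a := by
    apply strictMono_nat_of_lt_succ
    intro n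
    exact hgt (n + 1) (a n) (hmem n)
  refine ⟨a, hamono, haS, ?_⟩
  intro i j hij
  have hi' : a i ∈ s j := hsmono (i + 1) j hij (hmem i)
  have := (hpick1 (s j)).2
  have hfi : a i ∈ (s j).filter (· ∈ S) := Finset.mem_filter.2 ⟨hi', by simpa using haS i⟩
  exact Set.mem_iInter₂.1 this (a i) hfi

/-- If `A ⊆ G` is stable (the relation `x · y ∈ A` has no order configurations of
unbounded length) and `A` has the 1-sided productset property, then `A` has the
productset property. -/
theorem stmt1 {G : Type*} [Group G] (A : Set G)
    (hstable : ∃ k : ℕ, ¬ ∃ b c : Fin k → G, ∀ i j : Fin k, b i * c j ∈ A ↔ i ≤ j)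
    (h1side : ∃ b c : ℕ → G, Function.Injective b ∧ Function.Injective c ∧
      ∀ i j : ℕ, i ≤ j → b i * c j ∈ A) :
    ∃ B C : Set G, B.Infinite ∧ C.Infinite ∧ ∀ b ∈ B, ∀ c ∈ C, b * c ∈ A := by
  classical
  obtain ⟨b, c, hb, hc, hbc⟩ := h1side
  set U : Ultrafilter ℕ := Filter.hyperfilter ℕ with hUdef
  have hU : ∀ s ∈ U, s.Infinite := by
    intro s hs
    by_contra hfin
    exact Filter.notMem_hyperfilter_of_finite (Set.not_infinite.1 hfin) hs
  set T : Set ℕ := {i | {j | b j * c i ∈ A} ∈ U} with hT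
  rcases Ultrafilter.mem_or_compl_mem U T with hTU | hTU
  · -- build a sequence with all reverse products in A
    obtain ⟨a, hamono, haT, haQ⟩ := build_seq U hU T hTU (fun i j => b j * c i ∈ A)
      (fun i hi => hi)
    refine ⟨Set.range (b ∘ a), Set.range (c ∘ a),
      Set.infinite_range_of_injective (hb.comp hamono.injective),
      Set.infinite_range_of_injective (hc.comp hamono.injective), ?_⟩
    rintro _ ⟨i, rfl⟩ _ ⟨j, rfl⟩
    rcases le_or_gt i j with h | h
    · exact hbc _ _ (hamono.le_iff_le.2 h)
    · exact haQ j i h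
  · -- order property of every length: contradiction with stability
    exfalso
    have hTU' : ∀ i ∈ Tᶜ, {j | b j * c i ∉ A} ∈ U := by
      intro i hi
      exact (Ultrafilter.compl_mem_iff_notMem).2 hi
    obtain ⟨a, hamono, haT, haQ⟩ := build_seq U hU Tᶜ hTU (fun i j => b j * c i ∉ A) hTU'
    obtain ⟨k, hk⟩ := hstable
    refine hk ⟨fun i => b (a i), fun j => c (a j), ?_⟩
    intro i j
    constructor
    · intro hmem
      by_contra hle
      exact haQ j i (by exact_mod_cast not_le.1 hle) hmem
    · intro hle
      exact hbc _ _ (hamono.le_iff_le.2 (by exact_mod_cast hle))
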